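/- Berkowitz's algorithm computes the characteristic polynomial: let R be a commutative ring, n ≥ 1, and A an n×n matrix over R (with rows and columns indexed 1, …, n). For 1 ≤ k ≤ n−1, let a_k = A_{kk}, let R_k be the row vector (A_{k,k+1}, …, A_{k,n}), let S_k be the column vector (A_{k+1,k}, …, A_{n,k}), and let M_k be the (n−k)×(n−k) submatrix (A_{ij})_{i,j>k}. Define Col(k,A) to be the (n−k+2)×(n−k+1) lower-triangular Toeplitz matrix whose first column is (1, −a_k, −R_kS_k, −R_kM_kS_k, −R_kM_k²S_k, …, −R_kM_k^{n−k−2}S_k), and define Col(n,A) to be the (2×1) matrix with entries (1, −A_{nn}). Then the (n+1)-entry column vector Col(1,A)·Col(2,A)⋯Col(n,A) is the coefficient vector of the characteristic polynomial of A: its i-th entry from the top (i = 0, …, n) equals the coefficient of X^{n−i} in charpoly(A). -/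

import Mathlib

open Matrix Polynomial

open Fin.NatCast in
/-- `berkCol R n A j` is the matrix `Col(k, A)` of Berkowitz's algorithm for `k = n - j`
(with rows and columns of `A` indexed `0, …, n-1` instead of `1, …, n`): the
`(n-k+2) × (n-k+1)` lower-triangular Toeplitz matrix with `1` on the main diagonal,
`-a_k` on the first subdiagonal, and `-(R_k ⬝ M_k^{i-j'-2} ⬝ S_k)` in position `(i, j')`
for `i ≥ j' + 2`. -/
def berkCol (R : Type*) [CommRing R] (n : ℕ) [NeZero n] (A : Matrix (Fin n) (Fin n) R)
    (j : ℕ) : Matrix (Fin (j + 2)) (Fin (j + 1)) R :=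
  Matrix.of fun i j' =>
    if (i : ℕ) = (j' : ℕ) then 1
    else if (i : ℕ) = (j' : ℕ) + 1 then -A ((n - j - 1 : ℕ) : Fin n) ((n - j - 1 : ℕ) : Fin n)
    else if (j' : ℕ) + 2 ≤ (i : ℕ) then
      -((fun l : Fin j => A ((n - j - 1 : ℕ) : Fin n) ((n - j + (l : ℕ) : ℕ) : Fin n)) ⬝ᵥ
        (((Matrix.of fun i' l : Fin j =>
            A ((n - j + (i' : ℕ) : ℕ) : Fin n) ((n - j + (l : ℕ) : ℕ) : Fin n)) ^
              ((i : ℕ) - (j' : ℕ) - 2)).mulVec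
          (fun l : Fin j => A ((n - j + (l : ℕ) : ℕ) : Fin n) ((n - j - 1 : ℕ) : Fin n))))
    else 0

/-- `berkProd R n A j` is the iterated product `Col(n-j+1, A) ⋯ Col(n, A)` of the last
`j` matrices of Berkowitz's algorithm; in particular `berkProd R n A n` is the full
product `Col(1, A) ⋯ Col(n, A)`, an `(n+1) × 1` matrix. -/
def berkProd (R : Type*) [CommRing R] (n : ℕ) [NeZero n] (A : Matrix (Fin n) (Fin n) R) :
    (j : ℕ) → Matrix (Fin (j + 1)) (Fin 1) R
  | 0 => 1
  | j + 1 => berkCol R n A j * berkProd R n A j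


section BerkowitzAux

variable {S : Type*} [CommRing S] {d : ℕ}


lemma coeff_divX_iterate (p : S[X]) (m k : ℕ) : (divX^[m] p).coeff k = p.coeff (k + m) := by
  induction m generalizing k with
  | zero => simp
  | succ m ih =>
    rw [Function.iterate_succ_apply', coeff_divX, ih]
    ring_nf

noncomputable def berkG (M : Matrix (Fin d) (Fin d) S) : Matrix (Fin d) (Fin d) S[X] :=
  ∑ m ∈ Finset.range d, divX^[m+1] M.charpoly • (M ^ m).map C

lemma map_C_smul (a : S) (N : Matrix (Fin d) (Fin d) S) :
    (a • N).map (C : S →+* S[X]) = C a • N.map C := by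
  ext x y; simp

lemma charmatrix_mul_berkG (M : Matrix (Fin d) (Fin d) S) :
    charmatrix M * berkG M = M.charpoly • 1 := by
  rcases subsingleton_or_nontrivial S with h | h
  · exact Subsingleton.elim _ _
  set p := M.charpoly with hp
  have hdeg : p.natDegree = d := by
    rw [hp, M.charpoly_natDegree_eq_dim, Fintype.card_fin]
  have hdivd : divX^[d] p = C (p.coeff d) := by
    ext k
    rw [coeff_divX_iterate, coeff_C]
    rcases Nat.eq_zero_or_pos k with hk | hk
    · simp [hk]
    · rw [if_neg hk.ne', Polynomial.coeff_eq_zero_of_natDegree_lt (by omega)]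
  have hscalar : (Matrix.scalar (Fin d) (X : S[X])) = (X : S[X]) • 1 := by
    rw [smul_one_eq_diagonal]; rfl
  have key : charmatrix M * berkG M =
      (∑ m ∈ Finset.range d,
        (divX^[m] p • (M ^ m).map C - divX^[m+1] p • (M ^ (m+1)).map C))
      - ∑ m ∈ Finset.range d, C (p.coeff m) • (M ^ m).map C := by
    rw [charmatrix, berkG, sub_mul, Finset.mul_sum, Finset.mul_sum, ← Finset.sum_sub_distrib,
      ← Finset.sum_sub_distrib]
    refine Finset.sum_congr rfl fun m _ => ?_
    rw [hscalar, smul_mul_assoc, one_mul, smul_smul, RingHom.mapMatrix_apply, mul_smul_comm,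
      ← Matrix.map_mul, ← pow_succ']
    have hX : (X : S[X]) * divX^[m+1] p = divX^[m] p - C (p.coeff m) := by
      rw [Function.iterate_succ_apply', eq_sub_iff_add_eq]
      have := X_mul_divX_add (divX^[m] p)
      rwa [coeff_divX_iterate, Nat.zero_add] at this
    rw [hX, sub_smul]
    abel
  rw [key, Finset.sum_range_sub']
  have h0 : divX^[0] p • ((M ^ 0).map (C : S →+* S[X])) = p • 1 := by
    simp
  have hCH : (C (p.coeff d) • (M ^ d).map (C : S →+* S[X]))
      + ∑ m ∈ Finset.range d, C (p.coeff m) • (M ^ m).map C = 0 := by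
    have hch : (Polynomial.aeval M p) = 0 := M.aeval_self_charpoly
    have : Polynomial.aeval M p = ∑ i ∈ Finset.range (d + 1), p.coeff i • M ^ i := by
      rw [Polynomial.aeval_eq_sum_range' (n := d + 1) (by omega)]
    rw [this] at hch
    refine Matrix.ext fun x y => ?_
    have h2 : ∑ i ∈ Finset.range (d+1), p.coeff i * (M ^ i) x y = 0 := by
      have := congrFun (congrFun hch x) y
      simpa [Matrix.sum_apply] using this
    simp only [Matrix.add_apply, Matrix.sum_apply, Matrix.smul_apply, Matrix.map_apply,
      smul_eq_mul, ← C_mul, Matrix.zero_apply]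
    rw [← map_sum, add_comm, ← map_add, ← Finset.sum_range_succ, h2, map_zero]
  rw [hdivd, sub_sub, hCH, sub_zero]
  exact h0


lemma dot_berkG (r s : Fin d → S) (M : Matrix (Fin d) (Fin d) S) :
    (fun l => C (r l)) ⬝ᵥ (berkG M).mulVec (fun t => C (s t)) =
      ∑ m ∈ Finset.range d, C (r ⬝ᵥ (M ^ m).mulVec s) * divX^[m+1] M.charpoly := by
  simp only [berkG, dotProduct, mulVec, Matrix.sum_apply, Matrix.smul_apply, Matrix.map_apply,
    smul_eq_mul, Finset.sum_mul, Finset.mul_sum, map_sum, C_mul]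
  trans ∑ l : Fin d, ∑ m ∈ Finset.range d, ∑ t : Fin d,
      C (r l) * (divX^[m + 1] M.charpoly * C ((M ^ m) l t) * C (s t))
  · exact Finset.sum_congr rfl fun _ _ => Finset.sum_comm
  trans ∑ m ∈ Finset.range d, ∑ l : Fin d, ∑ t : Fin d,
      C (r l) * (divX^[m + 1] M.charpoly * C ((M ^ m) l t) * C (s t))
  · exact Finset.sum_comm
  refine Finset.sum_congr rfl fun m _ => Finset.sum_congr rfl fun l _ =>
    Finset.sum_congr rfl fun t _ => by ring

lemma samuelson (b : S) (r s : Fin d → S) (M : Matrix (Fin d) (Fin d) S) :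
    (Matrix.fromBlocks (Matrix.of fun _ _ : Fin 1 => b) (Matrix.of fun _ l => r l)
      (Matrix.of fun i _ => s i) M).charpoly
    = (X - C b) * M.charpoly
      - ∑ m ∈ Finset.range d, C (r ⬝ᵥ (M ^ m).mulVec s) * divX^[m+1] M.charpoly := by
  set p := M.charpoly with hp
  set N := charmatrix M with hN
  set Scol : Matrix (Fin d) (Fin 1) S[X] := (Matrix.of fun i (_ : Fin 1) => s i).map C with hScol
  set Rrow : Matrix (Fin 1) (Fin d) S[X] := (Matrix.of fun (_ : Fin 1) l => r l).map C with hRrow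
  set T : Matrix (Fin 1) (Fin 1) S[X] :=
    Matrix.of fun _ _ => (X - C b) * p
      - ∑ m ∈ Finset.range d, C (r ⬝ᵥ (M ^ m).mulVec s) * divX^[m+1] p with hT
  set Q : Matrix (Fin 1 ⊕ Fin d) (Fin 1 ⊕ Fin d) S[X] :=
    Matrix.fromBlocks (p • 1) 0 (berkG M * Scol) 1 with hQ
  have hprod : charmatrix (Matrix.fromBlocks (Matrix.of fun _ _ : Fin 1 => b)
        (Matrix.of fun _ l => r l) (Matrix.of fun i _ => s i) M) * Q
      = Matrix.fromBlocks T (-Rrow) 0 N := by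
    rw [charmatrix_fromBlocks, hQ, Matrix.fromBlocks_multiply]
    have e11 : (Matrix.of fun _ _ : Fin 1 => b).charmatrix * (p • 1) + -Rrow * (berkG M * Scol)
        = T := by
      refine Matrix.ext fun i j => ?_
      have hi : i = 0 := Subsingleton.elim _ _
      have hj : j = 0 := Subsingleton.elim _ _
      subst hi hj
      have h1 : ((Matrix.of fun _ _ : Fin 1 => b).charmatrix * (p • 1)) 0 0 = (X - C b) * p := by
        simp [Matrix.mul_apply, Fin.sum_univ_one, Matrix.one_apply]
      have h2 : (-Rrow * (berkG M * Scol)) 0 0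
          = -((fun l => C (r l)) ⬝ᵥ (berkG M).mulVec (fun t => C (s t))) := by
        simp [Matrix.neg_apply, Matrix.mul_apply, Matrix.mulVec, dotProduct, hRrow, hScol,
          Finset.mul_sum]
      rw [Matrix.add_apply, h1, h2, dot_berkG, hT, Matrix.of_apply, ← hp]
      ring
    have e12 : (Matrix.of fun _ _ : Fin 1 => b).charmatrix * (0 : Matrix (Fin 1) (Fin d) S[X])
        + -Rrow * (1 : Matrix (Fin d) (Fin d) S[X]) = -Rrow := by
      rw [Matrix.mul_zero, Matrix.mul_one, zero_add]
    have e21 : -Scol * (p • (1 : Matrix (Fin 1) (Fin 1) S[X])) + N * (berkG M * Scol) = 0 := by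
      rw [Matrix.mul_smul, Matrix.mul_one, ← Matrix.mul_assoc, hN, charmatrix_mul_berkG,
        Matrix.smul_mul, Matrix.one_mul, ← hp, smul_neg, neg_add_cancel]
    have e22 : -Scol * (0 : Matrix (Fin 1) (Fin d) S[X]) + N * (1 : Matrix (Fin d) (Fin d) S[X])
        = N := by
      rw [Matrix.mul_zero, Matrix.mul_one, zero_add]
    rw [← hRrow, ← hScol, ← hN, e11, e12, e21, e22]
  have hQdet : Q.det = p := by
    rw [hQ, Matrix.det_fromBlocks_zero₁₂, Matrix.det_one, mul_one, Matrix.det_fin_one,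
      Matrix.smul_apply, Matrix.one_apply_eq, smul_eq_mul, mul_one]
  have hdet := congrArg Matrix.det hprod
  rw [Matrix.det_mul, hQdet, Matrix.det_fromBlocks_zero₂₁, Matrix.det_fin_one] at hdet
  exact (M.charpoly_monic.isRegular).right hdet


lemma samuelson_coeff (b : S) (r s : Fin d → S) (M : Matrix (Fin d) (Fin d) S) (i : Fin (d + 2)) :
    (Matrix.fromBlocks (Matrix.of fun _ _ : Fin 1 => b) (Matrix.of fun _ l => r l)
      (Matrix.of fun i _ => s i) M).charpoly.coeff (d + 1 - (i : ℕ))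
    = ∑ j' : Fin (d + 1),
        (if (i : ℕ) = (j' : ℕ) then 1
         else if (i : ℕ) = (j' : ℕ) + 1 then -b
         else if (j' : ℕ) + 2 ≤ (i : ℕ) then -(r ⬝ᵥ (M ^ ((i : ℕ) - (j' : ℕ) - 2)).mulVec s)
         else 0) * M.charpoly.coeff (d - (j' : ℕ)) := by
  rcases subsingleton_or_nontrivial S with h | h
  · exact Subsingleton.elim _ _
  set p := M.charpoly with hp
  have hdeg : p.natDegree = d := by
    rw [hp, M.charpoly_natDegree_eq_dim, Fintype.card_fin]
  have hcoeff_hi : ∀ t, d < t → p.coeff t = 0 := fun t ht =>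
    Polynomial.coeff_eq_zero_of_natDegree_lt (by omega)
  set iv := (i : ℕ) with hiv
  have hivle : iv ≤ d + 1 := by omega
  rw [samuelson]
  have hL : ((X - C b) * p
        - ∑ m ∈ Finset.range d, C (r ⬝ᵥ (M ^ m).mulVec s) * divX^[m+1] p).coeff (d + 1 - iv)
      = (X * p).coeff (d + 1 - iv) - b * p.coeff (d + 1 - iv)
        - ∑ m ∈ Finset.range d, (r ⬝ᵥ (M ^ m).mulVec s) * p.coeff ((d + 1 - iv) + (m + 1)) := by
    rw [coeff_sub, sub_mul, coeff_sub, coeff_C_mul, finset_sum_coeff]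
    congr 1
    refine Finset.sum_congr rfl fun m _ => ?_
    rw [coeff_C_mul, coeff_divX_iterate]
  rw [hL]
  rw [Fin.sum_univ_eq_sum_range (fun j' =>
    (if iv = j' then (1 : S)
     else if iv = j' + 1 then -b
     else if j' + 2 ≤ iv then -(r ⬝ᵥ (M ^ (iv - j' - 2)).mulVec s)
     else 0) * p.coeff (d - j')) (d + 1)]
  have hsplit : ∀ j' ∈ Finset.range (d + 1),
      (if iv = j' then (1 : S)
       else if iv = j' + 1 then -b
       else if j' + 2 ≤ iv then -(r ⬝ᵥ (M ^ (iv - j' - 2)).mulVec s)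
       else 0) * p.coeff (d - j')
      = (if iv = j' then p.coeff (d - j') else 0)
        + ((if iv = j' + 1 then -b * p.coeff (d - j') else 0)
        + (if j' + 2 ≤ iv then -(r ⬝ᵥ (M ^ (iv - j' - 2)).mulVec s) * p.coeff (d - j') else 0)) := by
    intro j' _
    split_ifs with h1 h2 h3 <;> first | omega | ring
  rw [Finset.sum_congr rfl hsplit, Finset.sum_add_distrib, Finset.sum_add_distrib]
  have hS1 : ∑ j' ∈ Finset.range (d + 1), (if iv = j' then p.coeff (d - j') else 0)
      = (X * p).coeff (d + 1 - iv) := by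
    rw [Finset.sum_ite_eq]
    rcases Nat.lt_or_ge iv (d + 1) with hlt | hge
    · rw [if_pos (Finset.mem_range.2 hlt)]
      obtain ⟨k, hk⟩ : ∃ k, d + 1 - iv = k + 1 := ⟨d - iv, by omega⟩
      rw [hk, coeff_X_mul]
      congr 1
      omega
    · have heq : iv = d + 1 := by omega
      rw [if_neg (by simp [heq]), heq, Nat.sub_self]
      simp [coeff_zero_eq_eval_zero]
  have hS2 : ∑ j' ∈ Finset.range (d + 1), (if iv = j' + 1 then -b * p.coeff (d - j') else 0)
      = -(b * p.coeff (d + 1 - iv)) := by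
    rcases Nat.eq_zero_or_pos iv with h0 | h0
    · rw [Finset.sum_eq_zero (fun j' _ => by rw [if_neg (by omega)]), h0]
      rw [hcoeff_hi (d + 1 - 0) (by omega)]
      ring
    · obtain ⟨w, hw⟩ : ∃ w, iv = w + 1 := ⟨iv - 1, by omega⟩
      rw [hw]
      simp only [Nat.add_right_cancel_iff]
      rw [Finset.sum_ite_eq, if_pos (Finset.mem_range.2 (by omega))]
      have : d - w = d + 1 - (w + 1) := by omega
      rw [this]
      ring
  have hS3 : ∑ j' ∈ Finset.range (d + 1),
        (if j' + 2 ≤ iv then -(r ⬝ᵥ (M ^ (iv - j' - 2)).mulVec s) * p.coeff (d - j') else 0)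
      = -∑ m ∈ Finset.range d, (r ⬝ᵥ (M ^ m).mulVec s) * p.coeff ((d + 1 - iv) + (m + 1)) := by
    have e1 : ∑ j' ∈ Finset.range (d + 1),
          (if j' + 2 ≤ iv then -(r ⬝ᵥ (M ^ (iv - j' - 2)).mulVec s) * p.coeff (d - j') else 0)
        = ∑ j' ∈ Finset.range (iv - 1),
            -((r ⬝ᵥ (M ^ (iv - j' - 2)).mulVec s) * p.coeff (d - j')) := by
      rw [← Finset.sum_subset (Finset.range_subset_range.2 (show iv - 1 ≤ d + 1 by omega))
        (fun x hx hnx => if_neg (by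
          simp only [Finset.mem_range] at hx hnx
          omega))]
      refine Finset.sum_congr rfl fun j' hj' => ?_
      simp only [Finset.mem_range] at hj'
      rw [if_pos (by omega), neg_mul]
    have e2 : ∑ m ∈ Finset.range d, (r ⬝ᵥ (M ^ m).mulVec s) * p.coeff ((d + 1 - iv) + (m + 1))
        = ∑ m ∈ Finset.range (iv - 1), (r ⬝ᵥ (M ^ m).mulVec s) * p.coeff ((d + 1 - iv) + (m + 1)) := by
      rw [← Finset.sum_subset (Finset.range_subset_range.2 (show iv - 1 ≤ d by omega))
        (fun x hx hnx => by
          simp only [Finset.mem_range] at hx hnx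
          rw [hcoeff_hi ((d + 1 - iv) + (x + 1)) (by omega), mul_zero])]
    rw [e1, e2, ← Finset.sum_range_reflect (fun m =>
      (r ⬝ᵥ (M ^ m).mulVec s) * p.coeff ((d + 1 - iv) + (m + 1))) (iv - 1), ← Finset.sum_neg_distrib]
    refine Finset.sum_congr rfl fun j' hj' => ?_
    simp only [Finset.mem_range] at hj'
    have h1 : iv - 1 - 1 - j' = iv - j' - 2 := by omega
    have h2 : (d + 1 - iv) + ((iv - 1 - 1 - j') + 1) = d - j' := by omega
    rw [h1]
    have h3 : d + 1 - iv + (iv - j' - 2 + 1) = d - j' := by omega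
    rw [h3]
  rw [hS1, hS2, hS3]
  ring

end BerkowitzAux

open Fin.NatCast in
/-- The lower-right `j × j` submatrix of `A`. -/
def berkSub (R : Type*) [CommRing R] (n : ℕ) [NeZero n] (A : Matrix (Fin n) (Fin n) R)
    (j : ℕ) : Matrix (Fin j) (Fin j) R :=
  Matrix.of fun i' l : Fin j =>
    A ((n - j + (i' : ℕ) : ℕ) : Fin n) ((n - j + (l : ℕ) : ℕ) : Fin n)

open Fin.NatCast in
lemma berk_main (R : Type*) [CommRing R] (n : ℕ) [NeZero n] (A : Matrix (Fin n) (Fin n) R)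
    (j : ℕ) (hj : j ≤ n) (i : Fin (j + 1)) :
    berkProd R n A j i 0 = (berkSub R n A j).charpoly.coeff (j - (i : ℕ)) := by
  induction j with
  | zero =>
    have hi : i = 0 := Fin.ext (by omega)
    subst hi
    have h1 : berkProd R n A 0 = 1 := rfl
    have h2 : (berkSub R n A 0).charpoly = 1 := by
      rw [Matrix.charpoly, Matrix.det_isEmpty]
    rw [h1, h2]
    simp
  | succ j ih =>
    have hj' : j ≤ n := by omega
    set b : R := A ((n - j - 1 : ℕ) : Fin n) ((n - j - 1 : ℕ) : Fin n) with hb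
    set r : Fin j → R := fun l => A ((n - j - 1 : ℕ) : Fin n) ((n - j + (l : ℕ) : ℕ) : Fin n)
      with hr
    set s : Fin j → R := fun l => A ((n - j + (l : ℕ) : ℕ) : Fin n) ((n - j - 1 : ℕ) : Fin n)
      with hs
    set F : Matrix (Fin 1 ⊕ Fin j) (Fin 1 ⊕ Fin j) R :=
      Matrix.fromBlocks (Matrix.of fun _ _ : Fin 1 => b) (Matrix.of fun _ l => r l)
        (Matrix.of fun i _ => s i) (berkSub R n A j) with hF
    set e : Fin 1 ⊕ Fin j ≃ Fin (j + 1) := finSumFinEquiv.trans (finCongr (Nat.add_comm 1 j))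
      with he
    have hcp : (berkSub R n A (j + 1)).charpoly = F.charpoly := by
      have hFsub : F = (berkSub R n A (j + 1)).submatrix e e := by
        ext x y
        have hval : ∀ z : Fin 1 ⊕ Fin j,
            ((e z : Fin (j + 1)) : ℕ) = Sum.elim (fun _ => 0) (fun t : Fin j => 1 + (t : ℕ)) z := by
          rintro (z | z) <;> simp [he] <;> omega
        rcases x with x | x <;> rcases y with y | y <;>
          simp only [hF, Matrix.fromBlocks_apply₁₁, Matrix.fromBlocks_apply₁₂,
            Matrix.fromBlocks_apply₂₁, Matrix.fromBlocks_apply₂₂, Matrix.submatrix_apply,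
            berkSub, Matrix.of_apply, hval, Sum.elim_inl, Sum.elim_inr, hb, hr, hs] <;>
          · have h1 : n - (j + 1) + 0 = n - j - 1 := by omega
            have h2 : ∀ t : ℕ, n - (j + 1) + (1 + t) = n - j + t := fun t => by omega
            simp only [h1, h2]
      rw [hFsub,
        show (berkSub R n A (j + 1)).submatrix ⇑e ⇑e
            = Matrix.reindex e.symm e.symm (berkSub R n A (j + 1)) by
          rw [Matrix.reindex_apply, Equiv.symm_symm],
        Matrix.charpoly_reindex]
    have hstep : berkProd R n A (j + 1) i 0
        = ∑ j' : Fin (j + 1), berkCol R n A j i j' * berkProd R n A j j' 0 := by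
      rw [show berkProd R n A (j + 1) = berkCol R n A j * berkProd R n A j from rfl,
        Matrix.mul_apply]
    have hsc := samuelson_coeff b r s (berkSub R n A j) i
    rw [← hF] at hsc
    rw [hstep, hcp, hsc]
    refine Finset.sum_congr rfl fun j' _ => ?_
    rw [ih hj' j']
    congr 1

/-- Berkowitz's algorithm computes the characteristic polynomial: the `i`-th entry of the
column vector `Col(1, A) ⋯ Col(n, A)` is the coefficient of `X^{n-i}` of `charpoly A`. -/
theorem berkowitz_charpoly (R : Type*) [CommRing R] (n : ℕ) [NeZero n]
    (A : Matrix (Fin n) (Fin n) R) (i : Fin (n + 1)) :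
    berkProd R n A n i 0 = A.charpoly.coeff (n - (i : ℕ)) := by
  have h := berk_main R n A n le_rfl i
  have hA : berkSub R n A n = A := by
    ext i' l
    simp [berkSub, Fin.cast_val_eq_self]
  rwa [hA] at h
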